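/- arXiv:1808.00188 — 2 statements merged into one kernel-verified Lean document; each statement's English description precedes it below -/
import Mathlib

section
/- Let ϕ = (1+√5)/2 be the golden ratio. Let f : ℤ_{≥1} → ℂ be an arithmetic function and A > 0 a real number such that |f(n)| ≪ n^{ϕ−1}·(log(e·n))^{−A} for all n ≥ 1. Then ∑_{n ≤ x} f(⌊x/n⌋) = x·∑_{n=1}^∞ f(n)/(n(n+1)) + O(x·(log x)^{−A(ϕ−1)}) as x → ∞; in particular the series ∑_{n=1}^∞ f(n)/(n(n+1)) converges absolutely. -/
set_option maxHeartbeats 2000000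

open Finset Real

/-- The golden ratio `ϕ = (1 + √5)/2`. -/
noncomputable def goldenRatio' : ℝ := (1 + Real.sqrt 5) / 2

private lemma sum_rpow_neg_le (p : ℝ) (hp0 : 0 < p) (hp1 : p < 1) (N : ℕ) (hN : 1 ≤ N) :
    ∑ n ∈ Icc 1 N, (n : ℝ) ^ (-p) ≤ 1 + (N : ℝ) ^ (1 - p) / (1 - p) := by
  obtain ⟨N', rfl⟩ : ∃ N', N = N' + 1 := ⟨N - 1, by omega⟩
  have h1 : ∑ n ∈ Icc 1 (N' + 1), (n : ℝ) ^ (-p)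
      = ∑ i ∈ range (N' + 1), ((1 + i : ℕ) : ℝ) ^ (-p) := by
    rw [← Finset.Ico_add_one_right_eq_Icc, Finset.sum_Ico_eq_sum_range]
    simp
  rw [h1, Finset.sum_range_succ']
  have h2 : ∑ i ∈ range N', ((1 + (i + 1) : ℕ) : ℝ) ^ (-p)
      ≤ ∫ t in (1:ℝ)..(1 + N' : ℝ), t ^ (-p) := by
    have := AntitoneOn.sum_le_integral (x₀ := 1) (a := N') (f := fun t : ℝ => t ^ (-p))
      (by
        intro a ha b hb hab
        exact Real.rpow_le_rpow_of_nonpos (by linarith [ha.1]) hab (by linarith))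
    refine le_trans (le_of_eq ?_) this
    refine Finset.sum_congr rfl fun i _ => ?_
    push_cast; ring_nf
  have h3 : (∫ t in (1:ℝ)..(1 + N' : ℝ), t ^ (-p))
      = ((1 + N' : ℝ) ^ (1 - p) - 1) / (1 - p) := by
    rw [integral_rpow (Or.inl (by linarith))]
    rw [Real.one_rpow]
    ring_nf
  have h4 : ((1 + (0:ℕ) : ℕ) : ℝ) ^ (-p) = 1 := by norm_num
  have hNN : ((N' + 1 : ℕ) : ℝ) = (1 + N' : ℝ) := by push_cast; ring
  rw [h4, hNN]
  have h5 : ((1 + N' : ℝ) ^ (1 - p) - 1) / (1 - p) ≤ (1 + N' : ℝ) ^ (1 - p) / (1 - p) := by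
    gcongr
    · linarith
  linarith [h2.trans (le_of_eq h3)]

private lemma summable_rpow_shift (p : ℝ) (hp : p < -1) (K : ℕ) :
    Summable fun i : ℕ => ((i : ℝ) + K + 1) ^ p := by
  have := (summable_nat_add_iff (f := fun n : ℕ => (n : ℝ) ^ p) (K + 1)).mpr
    (Real.summable_nat_rpow.mpr hp)
  refine this.congr fun i => ?_
  push_cast; ring_nf

private lemma tsum_rpow_tail_le (p : ℝ) (hp : p < -1) (K : ℕ) (hK : 1 ≤ K) :
    ∑' i : ℕ, ((i : ℝ) + K + 1) ^ p ≤ (K : ℝ) ^ (p + 1) / (-(p + 1)) := by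
  have hK0 : (0:ℝ) < K := by exact_mod_cast hK
  apply (summable_rpow_shift p hp K).tsum_le_of_sum_le
  intro s
  obtain ⟨L, hL⟩ := s.exists_nat_subset_range
  have hnn : ∀ i : ℕ, 0 ≤ ((i : ℝ) + K + 1) ^ p := fun i => Real.rpow_nonneg (by positivity) _
  refine le_trans (Finset.sum_le_sum_of_subset_of_nonneg hL fun i _ _ => hnn i) ?_
  have h2 : ∑ i ∈ range L, ((i : ℝ) + K + 1) ^ p
      ≤ ∫ t in (K:ℝ)..((K:ℝ) + L), t ^ p := by
    have := AntitoneOn.sum_le_integral (x₀ := (K:ℝ)) (a := L) (f := fun t : ℝ => t ^ p)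
      (by
        intro a ha b hb hab
        exact Real.rpow_le_rpow_of_nonpos (by linarith [ha.1]) hab (by linarith))
    refine le_trans (le_of_eq ?_) this
    refine Finset.sum_congr rfl fun i _ => ?_
    push_cast; ring_nf
  have h3 : (∫ t in (K:ℝ)..((K:ℝ) + L), t ^ p)
      = (((K:ℝ) + L) ^ (p + 1) - (K:ℝ) ^ (p + 1)) / (p + 1) := by
    rw [integral_rpow]
    right
    refine ⟨by linarith, ?_⟩
    rw [Set.uIcc_of_le (le_add_of_nonneg_right (Nat.cast_nonneg L))]
    rintro ⟨h0, -⟩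
    linarith
  have h4 : (((K:ℝ) + L) ^ (p + 1) - (K:ℝ) ^ (p + 1)) / (p + 1)
      = ((K:ℝ) ^ (p + 1) - ((K:ℝ) + L) ^ (p + 1)) / (-(p + 1)) := by
    rw [div_neg, ← neg_div, neg_sub]
  have h5 : ((K:ℝ) ^ (p + 1) - ((K:ℝ) + L) ^ (p + 1)) / (-(p + 1))
      ≤ (K : ℝ) ^ (p + 1) / (-(p + 1)) := by
    gcongr
    · linarith
    · linarith [Real.rpow_nonneg (by positivity : (0:ℝ) ≤ (K:ℝ) + L) (p + 1)]
  linarith [h2.trans (le_of_eq h3)]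

private lemma fiber_eq (x : ℝ) (hx : 1 ≤ x) (m : ℕ) (hm : 1 ≤ m) :
    (Icc 1 ⌊x⌋₊).filter (fun n : ℕ => ⌊x / (n:ℝ)⌋₊ = m) = Ioc ⌊x / ((m:ℝ)+1)⌋₊ ⌊x / (m:ℝ)⌋₊ := by
  have hx0 : (0:ℝ) < x := by linarith
  have hm0 : (0:ℝ) < m := by exact_mod_cast hm
  ext n
  simp only [Finset.mem_filter, Finset.mem_Icc, Finset.mem_Ioc]
  constructor
  · rintro ⟨⟨hn1, hnM⟩, hfl⟩
    have hn0 : (0:ℝ) < n := by exact_mod_cast hn1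
    obtain ⟨hml, hmu⟩ := (Nat.floor_eq_iff (by positivity)).mp hfl
    constructor
    · rw [Nat.floor_lt (by positivity)]
      rw [div_lt_iff₀ (by positivity)]
      rw [le_div_iff₀ hn0] at hml
      calc x < ((m:ℝ) + 1) * n := by rw [div_lt_iff₀ hn0] at hmu; linarith
      _ = (n:ℝ) * ((m:ℝ) + 1) := by ring
    · apply Nat.le_floor
      rw [le_div_iff₀ hm0]
      rw [le_div_iff₀ hn0] at hml
      linarith
  · rintro ⟨hlt, hle⟩
    have hn1 : 1 ≤ n := by
      rcases Nat.eq_zero_or_pos n with h | h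
      · exfalso; omega
      · exact h
    have hn0 : (0:ℝ) < n := by exact_mod_cast hn1
    have hnle : (n:ℝ) ≤ x / m := by
      exact_mod_cast (Nat.le_floor_iff (by positivity)).mp hle
    have hngt : x / ((m:ℝ) + 1) < n := (Nat.floor_lt (by positivity)).mp hlt
    have hnx : (n:ℝ) ≤ x := le_trans hnle (div_le_self hx0.le (by exact_mod_cast hm))
    refine ⟨⟨hn1, Nat.le_floor hnx⟩, ?_⟩
    rw [Nat.floor_eq_iff (by positivity)]
    constructor
    · rw [le_div_iff₀ hn0]
      rw [le_div_iff₀ hm0] at hnle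
      linarith
    · rw [div_lt_iff₀ hn0]
      rw [div_lt_iff₀ (by positivity)] at hngt
      linarith

/-- If `|f(n)| ≪ n^{ϕ−1}(log(e·n))^{−A}` then
`∑_{n ≤ x} f(⌊x/n⌋) = x·∑_{n ≥ 1} f(n)/(n(n+1)) + O(x (log x)^{−A(ϕ−1)})`;
in particular the series converges absolutely. -/
theorem sum_f_floor_div_golden (f : ℕ → ℂ) (A : ℝ) (hA : 0 < A)
    (hf : ∃ B : ℝ, 0 < B ∧ ∀ n : ℕ, 1 ≤ n →
      ‖f n‖ ≤ B * (n : ℝ) ^ (goldenRatio' - 1) * Real.log (Real.exp 1 * n) ^ (-A)) :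
    Summable (fun n : ℕ => ‖f (n + 1)‖ / (((n : ℝ) + 1) * ((n : ℝ) + 2))) ∧
    ∃ C : ℝ, 0 < C ∧ ∃ x₀ : ℝ, ∀ x : ℝ, x₀ ≤ x →
      ‖(∑ n ∈ Finset.Icc 1 ⌊x⌋₊, f ⌊x / (n : ℝ)⌋₊) -
          (x : ℂ) * ∑' n : ℕ, f (n + 1) / ((((n : ℕ) : ℂ) + 1) * (((n : ℕ) : ℂ) + 2))‖ ≤
        C * x * Real.log x ^ (-(A * (goldenRatio' - 1))) := by
  classical
  obtain ⟨B, hB, hfB⟩ := hf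
  set g : ℝ := goldenRatio' - 1 with hgdef
  have hg0 : 0 < g := by
    have h5 : (2:ℝ) < Real.sqrt 5 := by
      have : (2:ℝ) = Real.sqrt 4 := by
        rw [show (4:ℝ) = 2^2 by norm_num, Real.sqrt_sq (by norm_num)]
      rw [this]
      exact Real.sqrt_lt_sqrt (by norm_num) (by norm_num)
    rw [hgdef]; unfold goldenRatio'; linarith
  have hg1 : g < 1 := by
    have h5 : Real.sqrt 5 < 3 := by
      rw [Real.sqrt_lt' (by norm_num)]; norm_num
    rw [hgdef]; unfold goldenRatio'; linarith
  have h1g : (0:ℝ) < 1 - g := by linarith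
  -- simplified pointwise bound
  have hfb : ∀ m : ℕ, 1 ≤ m → ‖f m‖ ≤ B * (m:ℝ) ^ g := by
    intro m hm
    have hm1 : (1:ℝ) ≤ m := by exact_mod_cast hm
    have hlog : 1 ≤ Real.log (Real.exp 1 * m) := by
      have ha : Real.exp 1 ≤ Real.exp 1 * m := le_mul_of_one_le_right (Real.exp_pos 1).le hm1
      have hb := Real.log_le_log (Real.exp_pos 1) ha
      rwa [Real.log_exp] at hb
    have hpow : Real.log (Real.exp 1 * m) ^ (-A) ≤ 1 :=
      Real.rpow_le_one_of_one_le_of_nonpos hlog (by linarith)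
    calc ‖f m‖ ≤ B * (m:ℝ)^g * Real.log (Real.exp 1 * m) ^ (-A) := hfB m hm
    _ ≤ B * (m:ℝ)^g * 1 := by
        apply mul_le_mul_of_nonneg_left hpow (by positivity)
    _ = B * (m:ℝ)^g := mul_one _
  -- summability of the norms
  have hpart1 : Summable (fun n : ℕ => ‖f (n + 1)‖ / (((n : ℝ) + 1) * ((n : ℝ) + 2))) := by
    have hmaj : Summable (fun n : ℕ => B * ((n+1:ℕ):ℝ)^(g-2)) := by
      apply Summable.mul_left
      exact (summable_nat_add_iff 1).mpr (Real.summable_nat_rpow.mpr (by linarith))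
    apply Summable.of_nonneg_of_le (fun n => by positivity) ?_ hmaj
    intro n
    have hfn : ‖f (n+1)‖ ≤ B * ((n+1:ℕ):ℝ)^g := hfb (n+1) (by omega)
    have hden : ((n:ℝ)+1)^(2:ℕ) ≤ ((n:ℝ)+1)*((n:ℝ)+2) := by nlinarith [Nat.cast_nonneg (α := ℝ) n]
    have hrw : ((n+1:ℕ):ℝ)^(g-2) = ((n+1:ℕ):ℝ)^g / ((n+1:ℕ):ℝ)^(2:ℕ) := by
      rw [← Real.rpow_natCast ((n+1:ℕ):ℝ) 2, ← Real.rpow_sub (by positivity)]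
      norm_num
    calc ‖f (n+1)‖ / (((n:ℝ)+1)*((n:ℝ)+2)) ≤ (B * ((n+1:ℕ):ℝ)^g) / (((n:ℝ)+1)^(2:ℕ)) := by
          apply div_le_div₀ (by positivity) hfn (by positivity) hden
    _ = B * (((n+1:ℕ):ℝ)^g / ((n+1:ℕ):ℝ)^(2:ℕ)) := by push_cast; ring
    _ = B * ((n+1:ℕ):ℝ)^(g-2) := by rw [hrw]
  refine ⟨hpart1, ?_⟩
  -- complex series
  set F : ℕ → ℂ := fun n : ℕ => f (n + 1) / ((((n : ℕ) : ℂ) + 1) * (((n : ℕ) : ℂ) + 2)) with hFdef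
  have hFnorm : ∀ n : ℕ, ‖F n‖ = ‖f (n+1)‖ / (((n:ℝ)+1)*((n:ℝ)+2)) := by
    intro n
    have h1 : ((n:ℂ)+1) = ((((n:ℝ)+1) : ℝ) : ℂ) := by push_cast; ring
    have h2 : ((n:ℂ)+2) = ((((n:ℝ)+2) : ℝ) : ℂ) := by push_cast; ring
    show ‖f (n + 1) / (((n:ℂ) + 1) * ((n:ℂ) + 2))‖ = _
    rw [h1, h2, norm_div, norm_mul, Complex.norm_real, Complex.norm_real,
        Real.norm_eq_abs, Real.norm_eq_abs,
        abs_of_pos (by positivity), abs_of_pos (by positivity)]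
  have hFnormsum : Summable fun n : ℕ => ‖F n‖ := hpart1.congr fun n => (hFnorm n).symm
  have hFsum : Summable F := hFnormsum.of_norm
  -- the key estimate
  set C₁ : ℝ := B * (1 + 1/(1-g)) + 2*B + B * (4:ℝ)^(1-g) / (1-g) with hC₁def
  have h4g : (0:ℝ) < (4:ℝ)^(1-g) := Real.rpow_pos_of_pos (by norm_num) _
  have hC₁ : 0 < C₁ := by
    have t1 : 0 < B * (1 + 1/(1-g)) := by
      have : (0:ℝ) < 1/(1-g) := by positivity
      nlinarith
    have t3 : 0 < B * (4:ℝ)^(1-g) / (1-g) := by positivity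
    rw [hC₁def]; nlinarith
  have key : ∀ x : ℝ, 64 ≤ x →
      ‖(∑ n ∈ Finset.Icc 1 ⌊x⌋₊, f ⌊x / (n : ℝ)⌋₊) - (x : ℂ) * ∑' n : ℕ, F n‖
        ≤ C₁ * x ^ ((1+g)/2) := by
    intro x hx
    have hx1 : (1:ℝ) ≤ x := by linarith
    have hx0 : (0:ℝ) < x := by linarith
    set M := ⌊x⌋₊ with hMdef
    set N := ⌊Real.sqrt x⌋₊ with hNdef
    set K := ⌊x / ((N:ℝ)+1)⌋₊ with hKdef
    have hsx8 : (8:ℝ) ≤ Real.sqrt x := by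
      have h64 : (8:ℝ) = Real.sqrt 64 := by
        rw [show (64:ℝ) = 8^2 by norm_num, Real.sqrt_sq (by norm_num)]
      rw [h64]
      exact Real.sqrt_le_sqrt hx
    have hsx0 : 0 < Real.sqrt x := by linarith
    have hNge : (8:ℕ) ≤ N := Nat.le_floor (by exact_mod_cast hsx8)
    have hNle : (N:ℝ) ≤ Real.sqrt x := Nat.floor_le hsx0.le
    have hNlt : Real.sqrt x < (N:ℝ) + 1 := Nat.lt_floor_add_one _
    have hN1 : (0:ℝ) < (N:ℝ) + 1 := by positivity
    have hdivsqrt : x / Real.sqrt x = Real.sqrt x := Real.div_sqrt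
    have hKle : (K:ℝ) ≤ Real.sqrt x := by
      have h1 : (K:ℝ) ≤ x / ((N:ℝ)+1) := Nat.floor_le (by positivity)
      have h2 : x / ((N:ℝ)+1) ≤ x / Real.sqrt x :=
        div_le_div_of_nonneg_left hx0.le hsx0 hNlt.le
      rw [hdivsqrt] at h2
      linarith
    have hKge : Real.sqrt x / 4 ≤ (K:ℝ) := by
      have h1 : x / ((N:ℝ)+1) < (K:ℝ) + 1 := by
        rw [hKdef]; exact Nat.lt_floor_add_one _
      have h2 : x / (2 * Real.sqrt x) ≤ x / ((N:ℝ)+1) :=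
        div_le_div_of_nonneg_left hx0.le hN1 (by linarith)
      have h3 : x / (2 * Real.sqrt x) = Real.sqrt x / 2 := by
        rw [div_eq_div_iff (by positivity) (by norm_num)]
        nlinarith [Real.mul_self_sqrt hx0.le]
      linarith
    have hK1 : 1 ≤ K := by
      have : (1:ℝ) ≤ (K:ℝ) := by linarith
      exact_mod_cast this
    have hK0 : (0:ℝ) < K := by
      have : (1:ℝ) ≤ (K:ℝ) := by exact_mod_cast hK1
      linarith
    have hMx : (M:ℝ) ≤ x := Nat.floor_le hx0.le
    have hM1 : 1 ≤ M := Nat.le_floor (by exact_mod_cast hx1)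
    -- split the sum
    have hsplit : ∑ n ∈ Icc 1 M, f ⌊x/(n:ℝ)⌋₊
        = (∑ n ∈ (Icc 1 M).filter (fun n : ℕ => K < ⌊x/(n:ℝ)⌋₊), f ⌊x/(n:ℝ)⌋₊)
          + ∑ n ∈ (Icc 1 M).filter (fun n : ℕ => ¬ K < ⌊x/(n:ℝ)⌋₊), f ⌊x/(n:ℝ)⌋₊ :=
      (Finset.sum_filter_add_sum_filter_not _ _ _).symm
    -- group the large-n part by the value of the floor
    have hmapsto : ∀ n ∈ (Icc 1 M).filter (fun n : ℕ => ¬ K < ⌊x/(n:ℝ)⌋₊),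
        ⌊x/(n:ℝ)⌋₊ ∈ Icc 1 K := by
      intro n hn
      simp only [Finset.mem_filter, Finset.mem_Icc, not_lt] at hn
      obtain ⟨⟨h1, h2⟩, h3⟩ := hn
      refine Finset.mem_Icc.mpr ⟨?_, h3⟩
      apply Nat.le_floor
      have hn0 : (0:ℝ) < n := by exact_mod_cast h1
      rw [Nat.cast_one, le_div_iff₀ hn0, one_mul]
      calc (n:ℝ) ≤ M := by exact_mod_cast h2
      _ ≤ x := hMx
    have hS2 : ∑ n ∈ (Icc 1 M).filter (fun n : ℕ => ¬ K < ⌊x/(n:ℝ)⌋₊), f ⌊x/(n:ℝ)⌋₊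
        = ∑ m ∈ Icc 1 K, ((⌊x/(m:ℝ)⌋₊ - ⌊x/((m:ℝ)+1)⌋₊ : ℕ) : ℂ) * f m := by
      rw [← Finset.sum_fiberwise_of_maps_to hmapsto]
      refine Finset.sum_congr rfl fun m hm => ?_
      obtain ⟨hm1, hmK⟩ := Finset.mem_Icc.mp hm
      have hff : ((Icc 1 M).filter (fun n : ℕ => ¬ K < ⌊x/(n:ℝ)⌋₊)).filter
          (fun n : ℕ => ⌊x/(n:ℝ)⌋₊ = m) = (Icc 1 M).filter (fun n : ℕ => ⌊x/(n:ℝ)⌋₊ = m) := by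
        rw [Finset.filter_filter]
        apply Finset.filter_congr
        intro n _
        constructor
        · exact fun h => h.2
        · exact fun h => ⟨by omega, h⟩
      rw [hff, hMdef, fiber_eq x hx1 m hm1]
      have hval : ∀ n ∈ Ioc ⌊x/((m:ℝ)+1)⌋₊ ⌊x/(m:ℝ)⌋₊, f ⌊x/(n:ℝ)⌋₊ = f m := by
        intro n hn
        have hmem : n ∈ (Icc 1 ⌊x⌋₊).filter (fun n : ℕ => ⌊x/(n:ℝ)⌋₊ = m) := by
          rw [fiber_eq x hx1 m hm1]; exact hn
        rw [(Finset.mem_filter.mp hmem).2]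
      rw [Finset.sum_congr rfl hval, Finset.sum_const, Nat.card_Ioc]
      simp [nsmul_eq_mul]
    have hKlt : x / ((N:ℝ)+1) < (K:ℝ)+1 := by
      rw [hKdef]; exact Nat.lt_floor_add_one _
    clear_value M N K
    -- bound 1 : small n
    have hsub1 : (Icc 1 M).filter (fun n : ℕ => K < ⌊x/(n:ℝ)⌋₊) ⊆ Icc 1 N := by
      intro n hn
      simp only [Finset.mem_filter, Finset.mem_Icc] at hn ⊢
      obtain ⟨⟨h1, h2⟩, h3⟩ := hn
      refine ⟨h1, ?_⟩
      have hn0 : (0:ℝ) < n := by exact_mod_cast h1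
      by_contra hcon
      push_neg at hcon
      have hfl : ((K:ℝ)+1) ≤ x / n := by
        have hKK : (K+1 : ℕ) ≤ ⌊x/(n:ℝ)⌋₊ := h3
        calc ((K:ℝ)+1) = ((K+1 : ℕ):ℝ) := by push_cast; ring
        _ ≤ (⌊x/(n:ℝ)⌋₊ : ℝ) := by exact_mod_cast hKK
        _ ≤ x / n := Nat.floor_le (by positivity)
      have h5 : x / ((N:ℝ)+1) < (K:ℝ)+1 := hKlt
      have hcon' : (N:ℝ)+1 ≤ (n:ℝ) := by exact_mod_cast Nat.succ_le_of_lt hcon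
      have h6 : x / (n:ℝ) ≤ x / ((N:ℝ)+1) :=
        div_le_div_of_nonneg_left hx0.le hN1 hcon'
      linarith
    have hb1 : ‖∑ n ∈ (Icc 1 M).filter (fun n : ℕ => K < ⌊x/(n:ℝ)⌋₊), f ⌊x/(n:ℝ)⌋₊‖
        ≤ B * (1 + 1/(1-g)) * x ^ ((1+g)/2) := by
      have step1 : ‖∑ n ∈ (Icc 1 M).filter (fun n : ℕ => K < ⌊x/(n:ℝ)⌋₊), f ⌊x/(n:ℝ)⌋₊‖
          ≤ ∑ n ∈ (Icc 1 M).filter (fun n : ℕ => K < ⌊x/(n:ℝ)⌋₊), B * (x/(n:ℝ))^g := by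
        refine le_trans (norm_sum_le _ _) (Finset.sum_le_sum ?_)
        intro n hn
        simp only [Finset.mem_filter, Finset.mem_Icc] at hn
        have hn0 : (0:ℝ) < n := by exact_mod_cast hn.1.1
        have hfl1 : 1 ≤ ⌊x/(n:ℝ)⌋₊ := le_trans hK1 (le_of_lt hn.2)
        calc ‖f ⌊x/(n:ℝ)⌋₊‖ ≤ B * ((⌊x/(n:ℝ)⌋₊ : ℕ):ℝ)^g := hfb _ hfl1
        _ ≤ B * (x/(n:ℝ))^g := by
            have hle : ((⌊x/(n:ℝ)⌋₊ : ℕ):ℝ) ≤ x/(n:ℝ) := Nat.floor_le (by positivity)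
            have h9 := Real.rpow_le_rpow (Nat.cast_nonneg _) hle hg0.le
            nlinarith
      have step2 : ∑ n ∈ (Icc 1 M).filter (fun n : ℕ => K < ⌊x/(n:ℝ)⌋₊), B * (x/(n:ℝ))^g
          ≤ ∑ n ∈ Icc 1 N, B * (x/(n:ℝ))^g :=
        Finset.sum_le_sum_of_subset_of_nonneg hsub1 (fun n _ _ => by positivity)
      have step3 : ∑ n ∈ Icc 1 N, B * (x/(n:ℝ))^g = B * (x^g * ∑ n ∈ Icc 1 N, (n:ℝ)^(-g)) := by
        rw [Finset.mul_sum, Finset.mul_sum]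
        refine Finset.sum_congr rfl fun n hn => ?_
        have hn1 := (Finset.mem_Icc.mp hn).1
        have hn0 : (0:ℝ) < n := by exact_mod_cast hn1
        rw [Real.div_rpow hx0.le hn0.le, Real.rpow_neg hn0.le, div_eq_mul_inv]
        try ring
      have step4 : ∑ n ∈ Icc 1 N, (n:ℝ)^(-g) ≤ 1 + (N:ℝ)^(1-g)/(1-g) :=
        sum_rpow_neg_le g hg0 hg1 N (by omega)
      have e1 : (N:ℝ)^(1-g) ≤ x^((1-g)/2) := by
        have ha : (N:ℝ)^(1-g) ≤ (Real.sqrt x)^(1-g) :=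
          Real.rpow_le_rpow (Nat.cast_nonneg _) hNle (by linarith)
        have hbb : (Real.sqrt x)^(1-g) = x^((1-g)/2) := by
          rw [Real.sqrt_eq_rpow, ← Real.rpow_mul hx0.le]
          congr 1; ring
        linarith [ha.trans_eq hbb]
      have e4 : x^g ≤ x^((1+g)/2) := Real.rpow_le_rpow_of_exponent_le hx1 (by linarith)
      have e2 : x^g * x^((1-g)/2) = x^((1+g)/2) := by
        rw [← Real.rpow_add hx0]
        congr 1; ring
      have hxg : (0:ℝ) ≤ x^g := Real.rpow_nonneg hx0.le g
      have e5 : x^g * (N:ℝ)^(1-g) ≤ x^((1+g)/2) := by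
        calc x^g * (N:ℝ)^(1-g) ≤ x^g * x^((1-g)/2) := mul_le_mul_of_nonneg_left e1 hxg
        _ = x^((1+g)/2) := e2
      calc ‖∑ n ∈ (Icc 1 M).filter (fun n : ℕ => K < ⌊x/(n:ℝ)⌋₊), f ⌊x/(n:ℝ)⌋₊‖
          ≤ B * (x^g * ∑ n ∈ Icc 1 N, (n:ℝ)^(-g)) := by
            rw [← step3]; exact step1.trans step2
      _ ≤ B * (x^g * (1 + (N:ℝ)^(1-g)/(1-g))) := by
            apply mul_le_mul_of_nonneg_left ?_ hB.le
            apply mul_le_mul_of_nonneg_left step4 hxg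
      _ = B * (x^g + (x^g * (N:ℝ)^(1-g)) * (1/(1-g))) := by ring
      _ ≤ B * (x^((1+g)/2) + x^((1+g)/2) * (1/(1-g))) := by
            have h7 : (0:ℝ) ≤ 1/(1-g) := by positivity
            apply mul_le_mul_of_nonneg_left ?_ hB.le
            have h8 := mul_le_mul_of_nonneg_right e5 h7
            linarith
      _ = B * (1 + 1/(1-g)) * x^((1+g)/2) := by ring
    -- bound 2 : middle terms
    have hIcc2range : ∀ (G : ℕ → ℂ), ∑ m ∈ Icc 1 K, G m = ∑ i ∈ range K, G (1+i) := by
      intro G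
      rw [← Finset.Ico_add_one_right_eq_Icc, Finset.sum_Ico_eq_sum_range]
      simp
    have hb2 : ‖(∑ m ∈ Icc 1 K, ((⌊x/(m:ℝ)⌋₊ - ⌊x/((m:ℝ)+1)⌋₊ : ℕ) : ℂ) * f m)
        - (x:ℂ) * ∑ i ∈ range K, F i‖ ≤ 2*B * x^((1+g)/2) := by
      rw [hIcc2range, Finset.mul_sum, ← Finset.sum_sub_distrib]
      have hterm : ∀ i ∈ range K,
          ‖((⌊x/((1+i:ℕ):ℝ)⌋₊ - ⌊x/(((1+i:ℕ):ℝ)+1)⌋₊ : ℕ) : ℂ) * f (1+i) - (x:ℂ) * F i‖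
            ≤ 2 * (B * ((K:ℝ))^g) := by
        intro i hi
        have hiK : i < K := Finset.mem_range.mp hi
        have hy0 : (0:ℝ) < ((1+i:ℕ):ℝ) := by positivity
        set a : ℕ := ⌊x/((1+i:ℕ):ℝ)⌋₊ with hadef
        set b : ℕ := ⌊x/(((1+i:ℕ):ℝ)+1)⌋₊ with hbdef
        have hba : b ≤ a := Nat.floor_mono (div_le_div_of_nonneg_left hx0.le hy0 (by linarith))
        have hcast : ((a - b : ℕ):ℝ) = (a:ℝ) - (b:ℝ) := by
          exact Nat.cast_sub hba
        have hfl_a1 : (a:ℝ) ≤ x/((1+i:ℕ):ℝ) := Nat.floor_le (by positivity)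
        have hfl_a2 : x/((1+i:ℕ):ℝ) < (a:ℝ) + 1 := Nat.lt_floor_add_one _
        have hfl_b1 : (b:ℝ) ≤ x/(((1+i:ℕ):ℝ)+1) := Nat.floor_le (by positivity)
        have hfl_b2 : x/(((1+i:ℕ):ℝ)+1) < (b:ℝ) + 1 := Nat.lt_floor_add_one _
        set r : ℝ := ((a - b:ℕ):ℝ) - x/(((i:ℝ)+1)*((i:ℝ)+2)) with hrdef
        have hiden : x/(((i:ℝ)+1)*((i:ℝ)+2)) = x/((1+i:ℕ):ℝ) - x/(((1+i:ℕ):ℝ)+1) := by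
          push_cast
          rw [div_sub_div _ _ (by positivity) (by positivity)]
          congr 1 <;> ring
        have habs : |r| ≤ 2 := by
          rw [hrdef, hcast, hiden, abs_le]
          constructor <;> linarith
        have heq : ((a - b : ℕ):ℂ) * f (1+i) - (x:ℂ) * F i = f (1+i) * ((r:ℝ):ℂ) := by
          have h1i : 1 + i = i + 1 := by omega
          have hFi : F i = f (i+1) / (((i:ℂ)+1)*((i:ℂ)+2)) := rfl
          have hrc : ((r:ℝ):ℂ) = ((a - b:ℕ):ℂ) - (x:ℂ)/(((i:ℂ)+1)*((i:ℂ)+2)) := by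
            rw [hrdef]; push_cast; ring
          rw [hFi, h1i, hrc]
          ring
        rw [heq, norm_mul, Complex.norm_real, Real.norm_eq_abs]
        have hfK : ‖f (1+i)‖ ≤ B * ((K:ℝ))^g := by
          have ha1 : ‖f (1+i)‖ ≤ B * ((1+i:ℕ):ℝ)^g := hfb (1+i) (by omega)
          have hik : (1+i:ℕ) ≤ K := by omega
          have ha2 : ((1+i:ℕ):ℝ)^g ≤ (K:ℝ)^g :=
            Real.rpow_le_rpow (by positivity) (by exact_mod_cast hik) hg0.le
          nlinarith
        calc ‖f (1+i)‖ * |r| ≤ (B * (K:ℝ)^g) * 2 := by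
              apply mul_le_mul hfK habs (abs_nonneg _) (by positivity)
        _ = 2 * (B * (K:ℝ)^g) := by ring
      refine le_trans (norm_sum_le _ _) ?_
      refine le_trans (Finset.sum_le_sum hterm) ?_
      rw [Finset.sum_const, Finset.card_range, nsmul_eq_mul]
      have hKK : (K:ℝ) * (K:ℝ)^g ≤ x^((1+g)/2) := by
        calc (K:ℝ)*(K:ℝ)^g = (K:ℝ)^((1:ℝ)+g) := by
              rw [Real.rpow_add hK0, Real.rpow_one]
        _ ≤ (Real.sqrt x)^((1:ℝ)+g) := Real.rpow_le_rpow hK0.le hKle (by linarith)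
        _ = x^((1+g)/2) := by
              rw [Real.sqrt_eq_rpow, ← Real.rpow_mul hx0.le]
              congr 1; ring
      have hKgpos : (0:ℝ) ≤ (K:ℝ)^g := Real.rpow_nonneg hK0.le g
      calc (K:ℝ) * (2 * (B * (K:ℝ)^g)) = 2*B*((K:ℝ)*(K:ℝ)^g) := by ring
      _ ≤ 2*B*x^((1+g)/2) := by nlinarith
    -- bound 3 : the tail of the series
    have hshift : Summable fun i : ℕ => ‖F (i+K)‖ := by
      exact (summable_nat_add_iff K).mpr hFnormsum
    have hb3 : ‖(x:ℂ) * ∑' i : ℕ, F (i+K)‖ ≤ (B * (4:ℝ)^(1-g)/(1-g)) * x^((1+g)/2) := by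
      have hmaj : ∀ i : ℕ, ‖F (i+K)‖ ≤ B * ((i:ℝ)+K+1)^(g-2) := by
        intro i
        have hy : (0:ℝ) < (i:ℝ)+K+1 := by positivity
        rw [hFnorm (i+K)]
        have hnum : ‖f (i+K+1)‖ ≤ B * ((i+K+1:ℕ):ℝ)^g := hfb _ (by omega)
        have hcast1 : ((i+K:ℕ):ℝ)+1 = (i:ℝ)+K+1 := by push_cast; ring
        have hcast2 : ((i+K:ℕ):ℝ)+2 = (i:ℝ)+K+2 := by push_cast; ring
        have hcast3 : ((i+K+1:ℕ):ℝ) = (i:ℝ)+K+1 := by push_cast; ring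
        rw [hcast1, hcast2]
        have hden : ((i:ℝ)+K+1)^(2:ℕ) ≤ ((i:ℝ)+K+1)*((i:ℝ)+K+2) := by nlinarith
        have hrw : ((i:ℝ)+K+1)^(g-2) = ((i:ℝ)+K+1)^g / ((i:ℝ)+K+1)^(2:ℕ) := by
          rw [← Real.rpow_natCast ((i:ℝ)+K+1) 2, ← Real.rpow_sub hy]
          norm_num
        have hnum' : ‖f ((i+K)+1)‖ ≤ B * ((i:ℝ)+K+1)^g := by
          rw [← hcast3]; exact hnum
        calc ‖f ((i+K)+1)‖ / (((i:ℝ)+K+1)*((i:ℝ)+K+2))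
            ≤ (B * ((i:ℝ)+K+1)^g) / (((i:ℝ)+K+1)^(2:ℕ)) :=
              div_le_div₀ (by positivity) hnum' (by positivity) hden
        _ = B * ((i:ℝ)+K+1)^(g-2) := by rw [hrw]; ring
      have htail : ∑' i : ℕ, ‖F (i+K)‖ ≤ B * ((K:ℝ)^(g-1)/(1-g)) := by
        have hsum2 : Summable fun i : ℕ => B * ((i:ℝ)+K+1)^(g-2) :=
          (summable_rpow_shift (g-2) (by linarith) K).mul_left B
        have h1 : ∑' i : ℕ, ‖F (i+K)‖ ≤ ∑' i : ℕ, B * ((i:ℝ)+K+1)^(g-2) :=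
          Summable.tsum_le_tsum hmaj hshift hsum2
        have h2 : ∑' i : ℕ, B * ((i:ℝ)+K+1)^(g-2) = B * ∑' i : ℕ, ((i:ℝ)+K+1)^(g-2) :=
          tsum_mul_left
        have h3 := tsum_rpow_tail_le (g-2) (by linarith) K hK1
        have h4 : (K:ℝ)^(g-2+1)/(-(g-2+1)) = (K:ℝ)^(g-1)/(1-g) := by
          congr 1
          · congr 1; ring
          · ring
        rw [h4] at h3
        rw [h2] at h1
        have h5 : B * ∑' i : ℕ, ((i:ℝ)+K+1)^(g-2) ≤ B * ((K:ℝ)^(g-1)/(1-g)) :=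
          mul_le_mul_of_nonneg_left h3 hB.le
        linarith
      rw [norm_mul, Complex.norm_real, Real.norm_eq_abs, abs_of_pos hx0]
      have h5 := norm_tsum_le_tsum_norm hshift
      have h6 : (K:ℝ)^(g-1) ≤ (Real.sqrt x/4)^(g-1) :=
        Real.rpow_le_rpow_of_nonpos (by positivity) hKge (by linarith)
      have h7 : (Real.sqrt x/4)^(g-1) = (Real.sqrt x)^(g-1) * (4:ℝ)^(1-g) := by
        rw [Real.div_rpow (Real.sqrt_nonneg x) (by norm_num)]
        rw [div_eq_mul_inv, ← Real.rpow_neg (by norm_num : (0:ℝ) ≤ 4)]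
        congr 1; ring
      have h8 : x * (Real.sqrt x)^(g-1) = x^((1+g)/2) := by
        nth_rewrite 1 [← Real.rpow_one x]
        rw [Real.sqrt_eq_rpow, ← Real.rpow_mul hx0.le, ← Real.rpow_add hx0]
        congr 1; ring
      calc x * ‖∑' i : ℕ, F (i+K)‖ ≤ x * (B * ((K:ℝ)^(g-1)/(1-g))) :=
            mul_le_mul_of_nonneg_left (le_trans h5 htail) hx0.le
      _ ≤ x * (B * ((Real.sqrt x)^(g-1) * (4:ℝ)^(1-g)/(1-g))) := by
            have h9 : (K:ℝ)^(g-1) ≤ (Real.sqrt x)^(g-1) * (4:ℝ)^(1-g) := h6.trans_eq h7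
            have h10 : (K:ℝ)^(g-1)/(1-g) ≤ (Real.sqrt x)^(g-1) * (4:ℝ)^(1-g)/(1-g) :=
              by gcongr
            have h11 := mul_le_mul_of_nonneg_left h10 hB.le
            exact mul_le_mul_of_nonneg_left h11 hx0.le
      _ = (B * (4:ℝ)^(1-g)/(1-g)) * (x * (Real.sqrt x)^(g-1)) := by ring
      _ = (B * (4:ℝ)^(1-g)/(1-g)) * x^((1+g)/2) := by rw [h8]
    -- assemble
    have hTsplit : ∑' n : ℕ, F n = (∑ i ∈ range K, F i) + ∑' i : ℕ, F (i+K) :=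
      (Summable.sum_add_tsum_nat_add K hFsum).symm
    rw [hsplit, hS2, hTsplit]
    have hre : ∀ t1 t2 t3 t4 : ℂ,
        t1 + t2 - (x:ℂ)*(t3 + t4) = t1 + (t2 - (x:ℂ)*t3) + (-((x:ℂ)*t4)) := by
      intros; ring
    rw [hre]
    refine le_trans (norm_add_le _ _) ?_
    refine le_trans (add_le_add_left (norm_add_le _ _) _) ?_
    rw [norm_neg]
    refine le_trans (add_le_add (add_le_add hb1 hb2) hb3) (le_of_eq ?_)
    rw [hC₁def]; ring
  -- conclude
  set c : ℝ := A * g with hcdef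
  have hc : 0 < c := mul_pos hA hg0
  set ε : ℝ := (1-g)/(2*c) with hεdef
  have hε : 0 < ε := div_pos h1g (by linarith)
  have hεc : ε * c = (1-g)/2 := by
    rw [hεdef]; field_simp
  refine ⟨C₁ / ε ^ c, div_pos hC₁ (Real.rpow_pos_of_pos hε c), 64, ?_⟩
  intro x hx
  have hkey := key x hx
  have hx0 : (0:ℝ) < x := by linarith
  have hx1 : (1:ℝ) < x := by linarith
  have hlog0 : 0 < Real.log x := Real.log_pos hx1
  have hlc : 0 < Real.log x ^ c := Real.rpow_pos_of_pos hlog0 c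
  have hgoalrw : C₁/ε^c * x * Real.log x ^ (-c) = (C₁/ε^c * x) / Real.log x ^ c := by
    rw [Real.rpow_neg hlog0.le]; ring
  rw [hgoalrw, le_div_iff₀ hlc]
  have hlogb : Real.log x ^ c ≤ (x^ε/ε)^c :=
    Real.rpow_le_rpow hlog0.le (Real.log_le_rpow_div hx0.le hε) hc.le
  have e1 : (x^ε/ε)^c = x^((1-g)/2) / ε^c := by
    rw [Real.div_rpow (Real.rpow_nonneg hx0.le ε) hε.le, ← Real.rpow_mul hx0.le, hεc]
  have e2 : x^((1+g)/2) * x^((1-g)/2) = x := by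
    rw [← Real.rpow_add hx0, show (1+g)/2 + (1-g)/2 = 1 by ring, Real.rpow_one]
  refine le_trans (mul_le_mul hkey hlogb (Real.rpow_nonneg hlog0.le c)
    (mul_nonneg hC₁.le (Real.rpow_nonneg hx0.le _))) (le_of_eq ?_)
  rw [e1]
  have e3 : C₁ * x^((1+g)/2) * (x^((1-g)/2)/ε^c)
      = C₁/ε^c * (x^((1+g)/2) * x^((1-g)/2)) := by ring
  rw [e3, e2]
end

section
/- Explicit bound for the summatory totient function: for all real x ≥ 1, ∑_{n ≤ x} φ(n) ≤ x²/(2ζ(2)) + x·log x + 2x. -/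
open Finset Real
open ArithmeticFunction
open scoped ArithmeticFunction.Moebius ArithmeticFunction.zeta

noncomputable def F : ℕ → ℝ := fun d => (μ d : ℝ) / d ^ 2

lemma F_zero : F 0 = 0 := by simp [F]

lemma F_abs (d : ℕ) : |F d| ≤ ((d : ℝ) ^ 2)⁻¹ := by
  rcases eq_or_ne d 0 with rfl | hd
  · simp [F]
  · rw [F, abs_div, abs_pow, Nat.abs_cast, div_eq_mul_inv]
    have : |(μ d : ℝ)| ≤ 1 := by
      rw [← Int.cast_abs]
      exact_mod_cast abs_moebius_le_one
    have h2 : (0:ℝ) < (d:ℝ)^2 := by positivity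
    nlinarith [inv_pos.mpr h2]

lemma summable_F : Summable F := by
  apply Summable.of_norm
  apply Summable.of_nonneg_of_le (fun n => norm_nonneg _) (fun n => ?_)
  · exact (Real.summable_one_div_nat_pow.mpr one_lt_two).congr (fun n => by
      rw [one_div])
  · simpa using F_abs n

lemma hasSum_F : HasSum F (6 / π ^ 2) := by
  have hsum := summable_F
  have h2 : (1 : ℝ) < (2 : ℂ).re := by norm_num
  have hz : LSeries (fun n => (μ n : ℂ)) 2 = 6 / (π : ℂ) ^ 2 := by
    have hmul := ArithmeticFunction.LSeries_zeta_mul_Lseries_moebius h2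
    have hzeta : LSeries (fun n => (ζ n : ℂ)) 2 = riemannZeta 2 :=
      ArithmeticFunction.LSeries_zeta_eq_riemannZeta h2
    rw [hzeta, riemannZeta_two] at hmul
    have hpi : ((π : ℂ)) ^ 2 ≠ 0 := by simp [Real.pi_ne_zero]
    rw [eq_div_iff hpi]
    linear_combination 6 * hmul
  have hterm : ∀ n, ((F n : ℂ)) = LSeries.term (fun n => (μ n : ℂ)) 2 n := by
    intro n
    rcases eq_or_ne n 0 with rfl | hn
    · simp [F, LSeries.term]
    · simp only [LSeries.term, hn, if_false, F]
      push_cast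
      rw [show ((2:ℂ)) = ((2:ℕ):ℂ) by norm_num, Complex.cpow_natCast]
  have : ((∑' n, F n : ℝ) : ℂ) = 6 / (π:ℂ)^2 := by
    rw [Complex.ofReal_tsum, ← hz, LSeries]
    exact tsum_congr hterm
  have heq : (∑' n, F n) = 6 / π ^ 2 := by
    apply Complex.ofReal_injective
    rw [this]; push_cast; ring
  exact heq ▸ hsum.hasSum

lemma sum_Icc_eq_Ioc (N : ℕ) : ∑ a ∈ Icc 1 N, F a = ∑ a ∈ Ioc 0 N, F a := by
  rw [show (1:ℕ) = 0 + 1 from rfl, Finset.Icc_add_one_left_eq_Ioc]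

lemma tendsto_partial :
    Filter.Tendsto (fun M => ∑ a ∈ Icc 1 M, F a) Filter.atTop (nhds (6 / π ^ 2)) := by
  have h1 := hasSum_F.tendsto_sum_nat.comp (Filter.tendsto_add_atTop_nat 1)
  refine h1.congr fun M => ?_
  simp only [Function.comp]
  rw [Finset.range_eq_Ico, Finset.Ico_add_one_right_eq_Icc]
  rw [← Finset.add_sum_erase _ F (Finset.mem_Icc.mpr ⟨le_refl 0, Nat.zero_le M⟩),
    Finset.Icc_erase_left, F_zero, zero_add, ← sum_Icc_eq_Ioc]

lemma sum_F_le (N : ℕ) (hN : 1 ≤ N) :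
    ∑ a ∈ Icc 1 N, F a ≤ 6 / π ^ 2 + (N : ℝ)⁻¹ := by
  have key : ∀ M, N ≤ M → ∑ a ∈ Icc 1 N, F a ≤ (∑ a ∈ Icc 1 M, F a) + (N : ℝ)⁻¹ := by
    intro M hM
    have hsplit : ∑ a ∈ Ioc 0 N, F a + ∑ a ∈ Ioc N M, F a = ∑ a ∈ Ioc 0 M, F a :=
      Finset.sum_Ioc_consecutive _ (Nat.zero_le N) hM
    have habs : |∑ a ∈ Ioc N M, F a| ≤ (N : ℝ)⁻¹ := by
      calc |∑ a ∈ Ioc N M, F a| ≤ ∑ a ∈ Ioc N M, |F a| := Finset.abs_sum_le_sum_abs _ _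
        _ ≤ ∑ a ∈ Ioc N M, ((a:ℝ)^2)⁻¹ := Finset.sum_le_sum fun a _ => F_abs a
        _ ≤ (N:ℝ)⁻¹ - (M:ℝ)⁻¹ := sum_Ioc_inv_sq_le_sub (by omega) hM
        _ ≤ (N:ℝ)⁻¹ := by
            have : (0:ℝ) ≤ (M:ℝ)⁻¹ := by positivity
            linarith
    rw [sum_Icc_eq_Ioc, sum_Icc_eq_Ioc M, ← hsplit]
    have := abs_le.mp habs
    linarith [this.1]
  have htend : Filter.Tendsto (fun M => (∑ a ∈ Icc 1 M, F a) + (N : ℝ)⁻¹)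
      Filter.atTop (nhds (6 / π ^ 2 + (N : ℝ)⁻¹)) :=
    tendsto_partial.add tendsto_const_nhds
  exact ge_of_tendsto htend (Filter.eventually_atTop.mpr ⟨N, key⟩)

lemma hyperbola (N : ℕ) (f : ℕ × ℕ → ℝ) :
    ∑ n ∈ Icc 1 N, ∑ p ∈ n.divisorsAntidiagonal, f p
      = ∑ a ∈ Icc 1 N, ∑ b ∈ Icc 1 (N / a), f (a, b) := by
  rw [Finset.sum_sigma', Finset.sum_sigma']
  refine Finset.sum_nbij' (fun x => ⟨x.2.1, x.2.2⟩) (fun y => ⟨y.1 * y.2, (y.1, y.2)⟩)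
    ?_ ?_ ?_ ?_ ?_
  · rintro ⟨n, p⟩ hx
    simp only [Finset.mem_sigma, Finset.mem_Icc, Nat.mem_divisorsAntidiagonal] at hx ⊢
    obtain ⟨⟨h1, h2⟩, hpn, hn0⟩ := hx
    have hp1 : 1 ≤ p.1 := Nat.one_le_iff_ne_zero.mpr (fun h => by rw [h] at hpn; simp at hpn; omega)
    have hp2 : 1 ≤ p.2 := Nat.one_le_iff_ne_zero.mpr (fun h => by rw [h] at hpn; simp at hpn; omega)
    refine ⟨⟨hp1, ?_⟩, hp2, ?_⟩
    · calc p.1 ≤ p.1 * p.2 := Nat.le_mul_of_pos_right _ hp2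
        _ = n := hpn
        _ ≤ N := h2
    · rw [Nat.le_div_iff_mul_le hp1]
      rw [mul_comm]; omega
  · rintro ⟨a, b⟩ hy
    simp only [Finset.mem_sigma, Finset.mem_Icc, Nat.mem_divisorsAntidiagonal] at hy ⊢
    obtain ⟨⟨ha1, haN⟩, hb1, hbN⟩ := hy
    have hab : a * b ≤ N := by
      rw [Nat.le_div_iff_mul_le ha1] at hbN
      rw [mul_comm]; omega
    refine ⟨⟨Nat.one_le_iff_ne_zero.mpr (by positivity), hab⟩, ?_, by positivity⟩
    trivial
  · rintro ⟨n, p⟩ hx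
    simp only [Finset.mem_sigma, Nat.mem_divisorsAntidiagonal] at hx
    obtain ⟨_, hpn, _⟩ := hx
    simp [hpn]
  · rintro ⟨a, b⟩ _
    rfl
  · rintro ⟨n, p⟩ _
    rfl

lemma totient_eq_sum (n : ℕ) (hn : 0 < n) :
    (Nat.totient n : ℝ) = ∑ p ∈ n.divisorsAntidiagonal, (μ p.1 : ℝ) * p.2 := by
  refine ((ArithmeticFunction.sum_eq_iff_sum_mul_moebius_eq
    (f := fun d => (Nat.totient d : ℝ)) (g := fun n => (n : ℝ))).mp ?_ n hn).symm
  intro n _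
  exact_mod_cast congrArg (Nat.cast : ℕ → ℝ) (Nat.sum_totient n)

lemma gauss_sum (m : ℕ) : ∑ b ∈ Icc 1 m, (b : ℝ) = m * (m + 1) / 2 := by
  induction m with
  | zero => simp
  | succ m ih =>
    rw [Finset.sum_Icc_succ_top (by omega), ih]
    push_cast; ring

/-- Explicit bound for the summatory totient: for all `x ≥ 1`,
`∑_{n ≤ x} φ(n) ≤ x²/(2ζ(2)) + x log x + 2x`. -/
theorem sum_totient_explicit_bound (x : ℝ) (hx : 1 ≤ x) :
    (∑ n ∈ Finset.Icc 1 ⌊x⌋₊, (Nat.totient n : ℝ)) ≤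
      x ^ 2 / (2 * (Real.pi ^ 2 / 6)) + x * Real.log x + 2 * x := by
  set N := ⌊x⌋₊ with hNdef
  have hN1 : 1 ≤ N := Nat.le_floor (by exact_mod_cast hx)
  have hNx : (N : ℝ) ≤ x := Nat.floor_le (by linarith)
  have hxN : x < N + 1 := Nat.lt_floor_add_one x
  have hx0 : (0:ℝ) ≤ x := by linarith
  have hlog : 0 ≤ Real.log x := Real.log_nonneg hx
  -- rewrite LHS via Möbius inversion and hyperbola swap
  have step1 : (∑ n ∈ Finset.Icc 1 N, (Nat.totient n : ℝ))
      = ∑ a ∈ Icc 1 N, (μ a : ℝ) * (((N / a : ℕ) : ℝ) * ((N / a : ℕ) + 1) / 2) := by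
    rw [Finset.sum_congr rfl (fun n hn => totient_eq_sum n (by
      simp only [Finset.mem_Icc] at hn; omega)),
      hyperbola N (fun p => (μ p.1 : ℝ) * p.2)]
    refine Finset.sum_congr rfl fun a _ => ?_
    show ∑ b ∈ Icc 1 (N / a), (μ a : ℝ) * (b : ℝ) = _
    rw [← Finset.mul_sum, gauss_sum]
  rw [step1]
  -- termwise bound
  have step2 : ∀ a ∈ Icc 1 N,
      (μ a : ℝ) * (((N / a : ℕ) : ℝ) * ((N / a : ℕ) + 1) / 2)
        ≤ F a * (x ^ 2 / 2) + (a : ℝ)⁻¹ * (x / 2) := by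
    intro a ha
    simp only [Finset.mem_Icc] at ha
    obtain ⟨ha1, haN⟩ := ha
    set m : ℕ := N / a with hmdef
    set c : ℝ := (μ a : ℝ) with hcdef
    have hA0 : (0:ℝ) < a := by exact_mod_cast ha1
    have hA1 : (1:ℝ) ≤ a := by exact_mod_cast ha1
    have hAx : (a:ℝ) ≤ x := le_trans (by exact_mod_cast haN) hNx
    have hc : |c| ≤ 1 := by
      rw [hcdef, ← Int.cast_abs]
      exact_mod_cast abs_moebius_le_one (n := a)
    have hu : (m:ℝ) * a ≤ x := by
      have : m * a ≤ N := Nat.div_mul_le_self N a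
      calc (m:ℝ) * a ≤ (N:ℝ) := by exact_mod_cast this
        _ ≤ x := hNx
    have hv : x ≤ (m:ℝ) * a + a := by
      have h1 : N + 1 ≤ m * a + a := by
        have h := Nat.div_add_mod N a
        have hmod : N % a < a := Nat.mod_lt N (by omega)
        have e : m * a = a * (N / a) := by rw [hmdef, mul_comm]
        omega
      have h2 : (N:ℝ) + 1 ≤ (m:ℝ) * a + a := by exact_mod_cast h1
      linarith
    have hc1 := abs_le.mp hc
    have hu0 : (0:ℝ) ≤ (m:ℝ) * a := by positivity
    have P : c * ((m:ℝ) * ((m:ℝ) + 1)) * (a:ℝ)^2 ≤ c * x^2 + x * a := by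
      rcases le_or_gt 0 c with h | h
      · have hu2 : ((m:ℝ)*a)^2 ≤ x^2 := by nlinarith
        have hua : ((m:ℝ)*a)*a ≤ x*a := mul_le_mul_of_nonneg_right hu hA0.le
        have h1 : c*(((m:ℝ)*a)^2+((m:ℝ)*a)*a) ≤ c*(x^2+x*a) :=
          mul_le_mul_of_nonneg_left (by linarith) h
        have h2 : (0:ℝ) ≤ (1-c)*(x*a) :=
          mul_nonneg (by linarith [hc1.2]) (mul_nonneg hx0 hA0.le)
        nlinarith [h1, h2]
      · have hge : (x - a)*x ≤ ((m:ℝ)*a)*((m:ℝ)*a + a) :=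
          mul_le_mul (by linarith) (by linarith) hx0 (by linarith)
        have h1 : c*(((m:ℝ)*a)*((m:ℝ)*a + a)) ≤ c*((x - a)*x) :=
          mul_le_mul_of_nonpos_left hge h.le
        have h2 : (0:ℝ) ≤ (1+c)*(x*a) :=
          mul_nonneg (by linarith [hc1.1]) (mul_nonneg hx0 hA0.le)
        nlinarith [h1, h2]
    have h2A : (0:ℝ) < 2 * (a:ℝ)^2 := by positivity
    calc c * ((m:ℝ) * ((m:ℝ) + 1) / 2)
        = (c * ((m:ℝ) * ((m:ℝ) + 1)) * (a:ℝ)^2) / (2 * (a:ℝ)^2) := by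
          field_simp
      _ ≤ (c * x^2 + x * a) / (2 * (a:ℝ)^2) := by gcongr
      _ = F a * (x ^ 2 / 2) + (a : ℝ)⁻¹ * (x / 2) := by
          rw [F, hcdef]
          field_simp
  calc ∑ a ∈ Icc 1 N, (μ a : ℝ) * (((N / a : ℕ) : ℝ) * ((N / a : ℕ) + 1) / 2)
      ≤ ∑ a ∈ Icc 1 N, (F a * (x ^ 2 / 2) + (a : ℝ)⁻¹ * (x / 2)) :=
        Finset.sum_le_sum step2
    _ = (∑ a ∈ Icc 1 N, F a) * (x ^ 2 / 2) + (∑ a ∈ Icc 1 N, (a:ℝ)⁻¹) * (x / 2) := by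
        rw [Finset.sum_add_distrib, Finset.sum_mul, Finset.sum_mul]
    _ ≤ (6 / π ^ 2 + (N : ℝ)⁻¹) * (x ^ 2 / 2) + (1 + Real.log x) * (x / 2) := by
        have hharm : (∑ a ∈ Icc 1 N, (a:ℝ)⁻¹) ≤ 1 + Real.log x := by
          have h1 : (∑ a ∈ Icc 1 N, (a:ℝ)⁻¹) = (harmonic N : ℝ) := by
            rw [harmonic_eq_sum_Icc]
            push_cast
            rfl
          have h2 : (harmonic N : ℝ) ≤ 1 + Real.log N := harmonic_le_one_add_log N
          have h3 : Real.log N ≤ Real.log x :=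
            Real.log_le_log (by exact_mod_cast hN1) hNx
          linarith [h1 ▸ h2]
        exact add_le_add
          (mul_le_mul_of_nonneg_right (sum_F_le N hN1) (by positivity))
          (mul_le_mul_of_nonneg_right hharm (by linarith))
    _ ≤ x ^ 2 / (2 * (π ^ 2 / 6)) + x * Real.log x + 2 * x := by
        have hpi : (0:ℝ) < π ^ 2 := by positivity
        have hNpos : (0:ℝ) < N := by exact_mod_cast hN1
        have hx2N : x ^ 2 * (N:ℝ)⁻¹ ≤ 2 * x := by
          have h2N : x ≤ 2 * N := by
            have : (1:ℝ) ≤ N := by exact_mod_cast hN1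
            linarith
          have hxx : x ^ 2 ≤ 2 * x * N := by nlinarith
          calc x ^ 2 * (N:ℝ)⁻¹ ≤ (2 * x * N) * (N:ℝ)⁻¹ :=
                mul_le_mul_of_nonneg_right hxx (by positivity)
            _ = 2 * x := by field_simp
        have heq : (6 / π ^ 2) * (x ^ 2 / 2) = x ^ 2 / (2 * (π ^ 2 / 6)) := by
          field_simp
        nlinarith [heq, hx2N, mul_nonneg hx0 hlog]
end
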